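/- Let n ≥ 2 be an integer and let q be a real number with 1 < q ≤ 2. Define, for each positive integer m, K_{m,n,q} = (ω_m Γ(m/q + 1) / (ω_{m+n} Γ((m+n)/q + 1))) · (m^m n^n / (m+n)^{m+n})^{1/2 - 1/q}. Then lim_{m→∞} K_{m,n,q} = q^{n/q} (2π)^{-n/2} (e/n)^{n(1/q - 1/2)}. -/

import Mathlib

open Real Filter Topology

/-- The Lebesgue volume of the unit ball in `ℝ^k`. -/
noncomputable def ballVol (k : ℕ) : ℝ := Real.pi ^ ((k : ℝ) / 2) / Real.Gamma ((k : ℝ) / 2 + 1)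

lemma wendel_upper (x s : ℝ) (hx : 0 < x) (hs0 : 0 ≤ s) (hs1 : s ≤ 1) :
    Real.Gamma (x + s) ≤ Real.Gamma x * x ^ s := by
  have h := Real.convexOn_log_Gamma.2 (Set.mem_Ioi.mpr hx)
    (Set.mem_Ioi.mpr (by linarith : (0:ℝ) < x + 1)) (by linarith : (0:ℝ) ≤ 1 - s) hs0 (by ring)
  simp only [smul_eq_mul, Function.comp_apply] at h
  have hxs : (1 - s) * x + s * (x + 1) = x + s := by ring
  rw [hxs] at h
  have hΓ : Real.log (Real.Gamma (x + 1)) = Real.log x + Real.log (Real.Gamma x) := by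
    rw [Real.Gamma_add_one hx.ne', Real.log_mul hx.ne' (Real.Gamma_pos_of_pos hx).ne']
  rw [hΓ] at h
  have h2 : Real.log (Real.Gamma (x + s)) ≤ Real.log (Real.Gamma x) + s * Real.log x := by
    nlinarith
  calc Real.Gamma (x + s) = Real.exp (Real.log (Real.Gamma (x + s))) :=
        (Real.exp_log (Real.Gamma_pos_of_pos (by linarith))).symm
    _ ≤ Real.exp (Real.log (Real.Gamma x) + s * Real.log x) := Real.exp_le_exp.mpr h2
    _ = Real.Gamma x * x ^ s := by
        rw [Real.exp_add, Real.exp_log (Real.Gamma_pos_of_pos hx),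
          Real.rpow_def_of_pos hx, mul_comm s]

lemma wendel_tendsto (s : ℝ) (hs0 : 0 ≤ s) (hs1 : s ≤ 1) :
    Tendsto (fun x : ℝ => Real.Gamma (x + s) / (Real.Gamma x * x ^ s)) atTop (𝓝 1) := by
  have hbase : Tendsto (fun x : ℝ => x / (x + s)) atTop (𝓝 1) := by
    have h1 : Tendsto (fun x : ℝ => (1 + s / x)⁻¹) atTop (𝓝 1) := by
      have : Tendsto (fun x : ℝ => 1 + s / x) atTop (𝓝 1) := by
        simpa using (tendsto_const_nhds : Tendsto (fun _ : ℝ => (1:ℝ)) atTop (𝓝 1)).add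
          ((tendsto_const_nhds : Tendsto (fun _ : ℝ => s) atTop (𝓝 s)).div_atTop tendsto_id)
      simpa using this.inv₀ one_ne_zero
    refine h1.congr' ?_
    filter_upwards [eventually_gt_atTop (0:ℝ)] with x hx
    have hxs : 0 < x + s := by linarith
    field_simp
  have hlow : Tendsto (fun x : ℝ => (x / (x + s)) ^ (1 - s)) atTop (𝓝 1) := by
    simpa using hbase.rpow_const (Or.inl one_ne_zero)
  refine tendsto_of_tendsto_of_tendsto_of_le_of_le' hlow tendsto_const_nhds ?_ ?_
  · filter_upwards [eventually_gt_atTop (0:ℝ)] with x hx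
    have hxs : 0 < x + s := by linarith
    have key : x * Real.Gamma x ≤ Real.Gamma (x + s) * (x + s) ^ (1 - s) := by
      have h := wendel_upper (x + s) (1 - s) hxs (by linarith) (by linarith)
      have : x + s + (1 - s) = x + 1 := by ring
      rw [this, Real.Gamma_add_one hx.ne'] at h
      exact h
    rw [Real.div_rpow hx.le hxs.le, div_le_div_iff₀ (rpow_pos_of_pos hxs _)
      (mul_pos (Real.Gamma_pos_of_pos hx) (rpow_pos_of_pos hx _))]
    calc x ^ (1 - s) * (Real.Gamma x * x ^ s) = (x ^ (1-s) * x ^ s) * Real.Gamma x := by ring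
      _ = x * Real.Gamma x := by rw [← Real.rpow_add hx]; norm_num
      _ ≤ Real.Gamma (x + s) * (x + s) ^ (1 - s) := key
  · filter_upwards [eventually_gt_atTop (0:ℝ)] with x hx
    rw [div_le_one (mul_pos (Real.Gamma_pos_of_pos hx) (rpow_pos_of_pos hx _))]
    exact wendel_upper x s hx hs0 hs1

lemma gamma_ratio_tendsto (a : ℝ) (ha : 0 ≤ a) :
    Tendsto (fun x : ℝ => Real.Gamma (x + a) / (Real.Gamma x * x ^ a)) atTop (𝓝 1) := by
  obtain ⟨k, hk⟩ : ∃ k : ℕ, a ≤ k := exists_nat_ge a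
  induction k generalizing a with
  | zero =>
    have ha0 : a = 0 := le_antisymm (by exact_mod_cast hk) ha
    subst ha0
    exact wendel_tendsto 0 le_rfl zero_le_one
  | succ k ih =>
    by_cases h1 : a ≤ 1
    · exact wendel_tendsto a ha h1
    push_neg at h1
    have hk' : a - 1 ≤ k := by push_cast at hk ⊢; linarith
    have key := (ih (a - 1) (by linarith) hk').comp
      (tendsto_atTop_add_const_right atTop (1:ℝ) tendsto_id)
    have h2 : Tendsto (fun x : ℝ => ((x + 1) / x) ^ (a - 1)) atTop (𝓝 1) := by
      have hb : Tendsto (fun x : ℝ => (x + 1) / x) atTop (𝓝 1) := by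
        have h1' : Tendsto (fun x : ℝ => 1 + x⁻¹) atTop (𝓝 1) := by
          simpa using (tendsto_const_nhds : Tendsto (fun _ : ℝ => (1:ℝ)) atTop (𝓝 1)).add
            tendsto_inv_atTop_zero
        refine h1'.congr' ?_
        filter_upwards [eventually_gt_atTop (0:ℝ)] with x hx
        field_simp
      simpa using hb.rpow_const (Or.inl one_ne_zero)
    have := key.mul h2
    rw [one_mul] at this
    refine this.congr' ?_
    filter_upwards [eventually_gt_atTop (0:ℝ)] with x hx
    have hx1 : (0:ℝ) < x + 1 := by linarith
    have e1 : x + 1 + (a - 1) = x + a := by ring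
    simp only [Function.comp_apply, id_eq, e1]
    rw [Real.Gamma_add_one hx.ne', Real.div_rpow hx1.le hx.le]
    have e2 : x ^ a = x ^ (a - 1) * x := by
      rw [← Real.rpow_add_one hx.ne']; ring_nf
    rw [e2]
    have hΓ := (Real.Gamma_pos_of_pos hx).ne'
    have hp1 := (Real.rpow_pos_of_pos hx1 (a-1)).ne'
    have hp2 := (Real.rpow_pos_of_pos hx (a-1)).ne'
    field_simp

lemma key_eq (n m : ℕ) (hn : 1 ≤ n) (hm : 1 ≤ m) (q : ℝ) (hq0 : 0 < q) :
    (ballVol m * Real.Gamma ((m : ℝ) / q + 1) /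
        (ballVol (m + n) * Real.Gamma (((m : ℝ) + n) / q + 1))) *
      ((m : ℝ) ^ m * (n : ℝ) ^ n / ((m : ℝ) + n) ^ (m + n)) ^ ((1:ℝ)/2 - 1/q)
    = Real.pi ^ (-(n:ℝ)/2) * ((n:ℝ)^n) ^ ((1:ℝ)/2 - 1/q) *
      ((Real.Gamma (((m:ℝ)+n)/2+1) / (Real.Gamma ((m:ℝ)/2+1) * ((m:ℝ)/2+1) ^ ((n:ℝ)/2))) *
        (Real.Gamma (((m:ℝ)+n)/q+1) / (Real.Gamma ((m:ℝ)/q+1) * ((m:ℝ)/q+1) ^ ((n:ℝ)/q)))⁻¹ *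
        (((m:ℝ)/2+1)/((m:ℝ)+n)) ^ ((n:ℝ)/2) *
        (((m:ℝ)/q+1)/((m:ℝ)+n)) ^ (-(n:ℝ)/q) *
        ((1+(n:ℝ)/m)^m)⁻¹ ^ ((1:ℝ)/2 - 1/q)) := by
  set c : ℝ := (1:ℝ)/2 - 1/q with hc
  have hM : (0:ℝ) < m := by exact_mod_cast hm
  have hN : (0:ℝ) < n := by exact_mod_cast hn
  have hMN : (0:ℝ) < (m:ℝ) + n := by linarith
  have hx2 : (0:ℝ) < (m:ℝ)/2+1 := by positivity
  have hxq : (0:ℝ) < (m:ℝ)/q+1 := by positivity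
  have hG1 : 0 < Real.Gamma ((m:ℝ)/2+1) := Real.Gamma_pos_of_pos hx2
  have hG2 : 0 < Real.Gamma (((m:ℝ)+n)/2+1) := Real.Gamma_pos_of_pos (by positivity)
  have hGq1 : 0 < Real.Gamma ((m:ℝ)/q+1) := Real.Gamma_pos_of_pos hxq
  have hGq2 : 0 < Real.Gamma (((m:ℝ)+n)/q+1) := Real.Gamma_pos_of_pos (by positivity)
  have h1N : (0:ℝ) < 1 + (n:ℝ)/m := by positivity
  have hD : (m : ℝ) ^ m * (n : ℝ) ^ n / ((m : ℝ) + n) ^ (m + n)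
      = ((1+(n:ℝ)/m)^m)⁻¹ * ((n:ℝ)^n * (((m:ℝ)+n)^n)⁻¹) := by
    have h1 : (1+(n:ℝ)/m) = ((m:ℝ)+n)/m := by field_simp
    rw [h1, div_pow, pow_add]
    field_simp
  have hDr : ((m : ℝ) ^ m * (n : ℝ) ^ n / ((m : ℝ) + n) ^ (m + n)) ^ c
      = ((1+(n:ℝ)/m)^m)⁻¹ ^ c * ((n:ℝ)^n) ^ c * ((((m:ℝ)+n)^n)⁻¹) ^ c := by
    rw [hD, Real.mul_rpow (by positivity) (by positivity),
      Real.mul_rpow (by positivity) (by positivity)]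
    ring
  have hMNc : ((((m:ℝ)+n)^n)⁻¹ : ℝ) ^ c = ((m:ℝ)+n) ^ ((n:ℝ)/q) * ((((m:ℝ)+n) ^ ((n:ℝ)/2))⁻¹) := by
    rw [← Real.rpow_natCast ((m:ℝ)+n) n, ← Real.rpow_neg hMN.le, ← Real.rpow_mul hMN.le]
    rw [show -(n:ℝ) * c = (n:ℝ)/q + -((n:ℝ)/2) by rw [hc]; field_simp; ring]
    rw [Real.rpow_add hMN, Real.rpow_neg hMN.le]
  have hBV : ballVol m * Real.Gamma ((m : ℝ) / q + 1) /
        (ballVol (m + n) * Real.Gamma (((m : ℝ) + n) / q + 1))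
      = Real.pi ^ (-(n:ℝ)/2) * (Real.Gamma (((m:ℝ)+n)/2+1) / Real.Gamma ((m:ℝ)/2+1)) *
        (Real.Gamma ((m:ℝ)/q+1) / Real.Gamma (((m:ℝ)+n)/q+1)) := by
    unfold ballVol
    push_cast
    have hsplit : Real.pi ^ (((m:ℝ)+n)/2) = Real.pi ^ ((m:ℝ)/2) * Real.pi ^ ((n:ℝ)/2) := by
      rw [← Real.rpow_add Real.pi_pos]; ring_nf
    have hneg : Real.pi ^ (-(n:ℝ)/2) = (Real.pi ^ ((n:ℝ)/2))⁻¹ := by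
      rw [neg_div, Real.rpow_neg Real.pi_pos.le]
    have hpi1 : (0:ℝ) < Real.pi ^ ((m:ℝ)/2) := Real.rpow_pos_of_pos Real.pi_pos _
    have hpi2 : (0:ℝ) < Real.pi ^ ((n:ℝ)/2) := Real.rpow_pos_of_pos Real.pi_pos _
    rw [hsplit, hneg]
    field_simp
  have hT2 : (((m:ℝ)/2+1)/((m:ℝ)+n)) ^ ((n:ℝ)/2)
      = ((m:ℝ)/2+1) ^ ((n:ℝ)/2) * ((((m:ℝ)+n) ^ ((n:ℝ)/2))⁻¹) := by
    rw [Real.div_rpow hx2.le hMN.le, div_eq_mul_inv]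
  have hTq : (((m:ℝ)/q+1)/((m:ℝ)+n)) ^ (-(n:ℝ)/q)
      = (((m:ℝ)/q+1) ^ ((n:ℝ)/q))⁻¹ * (((m:ℝ)+n) ^ ((n:ℝ)/q)) := by
    rw [Real.div_rpow hxq.le hMN.le, neg_div, Real.rpow_neg hxq.le, Real.rpow_neg hMN.le]
    field_simp
  rw [hBV, hDr, hMNc, hT2, hTq]
  have hp2 : (0:ℝ) < ((m:ℝ)/2+1) ^ ((n:ℝ)/2) := Real.rpow_pos_of_pos hx2 _
  have hpq : (0:ℝ) < ((m:ℝ)/q+1) ^ ((n:ℝ)/q) := Real.rpow_pos_of_pos hxq _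
  have hpMN2 : (0:ℝ) < ((m:ℝ)+n) ^ ((n:ℝ)/2) := Real.rpow_pos_of_pos hMN _
  have hpMNq : (0:ℝ) < ((m:ℝ)+n) ^ ((n:ℝ)/q) := Real.rpow_pos_of_pos hMN _
  field_simp

theorem stmt_9 (n : ℕ) (hn : 2 ≤ n) (q : ℝ) (hq1 : 1 < q) (hq2 : q ≤ 2) :
    Filter.Tendsto
      (fun m : ℕ =>
        (ballVol m * Real.Gamma ((m : ℝ) / q + 1) /
            (ballVol (m + n) * Real.Gamma (((m : ℝ) + n) / q + 1))) *
          ((m : ℝ) ^ m * (n : ℝ) ^ n / ((m : ℝ) + n) ^ (m + n)) ^ ((1 : ℝ) / 2 - 1 / q))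
      Filter.atTop
      (nhds (q ^ ((n : ℝ) / q) * (2 * Real.pi) ^ (-(n : ℝ) / 2) *
        (Real.exp 1 / n) ^ ((n : ℝ) * (1 / q - 1 / 2)))) := by
  have hq0 : (0:ℝ) < q := by linarith
  have hN : (0:ℝ) < n := by
    have : (0:ℕ) < n := by omega
    exact_mod_cast this
  have hcastTop : Tendsto (fun m : ℕ => (m:ℝ)) atTop atTop := tendsto_natCast_atTop_atTop
  have hx2top : Tendsto (fun m : ℕ => (m:ℝ)/2+1) atTop atTop :=
    tendsto_atTop_add_const_right _ 1 (hcastTop.atTop_div_const (by norm_num))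
  have hxqtop : Tendsto (fun m : ℕ => (m:ℝ)/q+1) atTop atTop :=
    tendsto_atTop_add_const_right _ 1 (hcastTop.atTop_div_const hq0)
  have hA : Tendsto (fun m : ℕ => Real.Gamma (((m:ℝ)+n)/2+1) /
      (Real.Gamma ((m:ℝ)/2+1) * ((m:ℝ)/2+1) ^ ((n:ℝ)/2))) atTop (𝓝 1) := by
    have h := (gamma_ratio_tendsto ((n:ℝ)/2) (by positivity)).comp hx2top
    refine h.congr fun m => ?_
    simp only [Function.comp_apply]
    rw [show (m:ℝ)/2+1+(n:ℝ)/2 = ((m:ℝ)+(n:ℝ))/2+1 by ring]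
  have hBinv : Tendsto (fun m : ℕ => (Real.Gamma (((m:ℝ)+n)/q+1) /
      (Real.Gamma ((m:ℝ)/q+1) * ((m:ℝ)/q+1) ^ ((n:ℝ)/q)))⁻¹) atTop (𝓝 1) := by
    have h := (gamma_ratio_tendsto ((n:ℝ)/q) (by positivity)).comp hxqtop
    have h2 : Tendsto (fun m : ℕ => Real.Gamma (((m:ℝ)+n)/q+1) /
        (Real.Gamma ((m:ℝ)/q+1) * ((m:ℝ)/q+1) ^ ((n:ℝ)/q))) atTop (𝓝 1) := by
      refine h.congr fun m => ?_
      simp only [Function.comp_apply]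
      rw [show (m:ℝ)/q+1+(n:ℝ)/q = ((m:ℝ)+(n:ℝ))/q+1 by ring]
    simpa using h2.inv₀ one_ne_zero
  have hminv : Tendsto (fun m : ℕ => ((m:ℝ))⁻¹) atTop (𝓝 0) :=
    tendsto_inv_atTop_zero.comp hcastTop
  have hT2b : Tendsto (fun m : ℕ => ((m:ℝ)/2+1)/((m:ℝ)+n)) atTop (𝓝 (2⁻¹ : ℝ)) := by
    have h : Tendsto (fun m : ℕ => ((1:ℝ)/2 + ((m:ℝ))⁻¹)/(1 + (n:ℝ) * ((m:ℝ))⁻¹)) atTop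
        (𝓝 (((1:ℝ)/2 + 0)/(1 + (n:ℝ) * 0))) :=
      (tendsto_const_nhds.add hminv).div
        (tendsto_const_nhds.add (tendsto_const_nhds.mul hminv)) (by norm_num)
    rw [show ((1:ℝ)/2 + 0)/(1 + (n:ℝ) * 0) = (2⁻¹ : ℝ) by norm_num] at h
    refine h.congr' ?_
    filter_upwards [eventually_gt_atTop 0] with m hm
    have hM : (0:ℝ) < m := by exact_mod_cast hm
    have hMN : (0:ℝ) < (m:ℝ) + n := by linarith
    field_simp
  have hTqb : Tendsto (fun m : ℕ => ((m:ℝ)/q+1)/((m:ℝ)+n)) atTop (𝓝 (q⁻¹ : ℝ)) := by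
    have h : Tendsto (fun m : ℕ => ((1:ℝ)/q + ((m:ℝ))⁻¹)/(1 + (n:ℝ) * ((m:ℝ))⁻¹)) atTop
        (𝓝 (((1:ℝ)/q + 0)/(1 + (n:ℝ) * 0))) :=
      (tendsto_const_nhds.add hminv).div
        (tendsto_const_nhds.add (tendsto_const_nhds.mul hminv)) (by norm_num)
    rw [show ((1:ℝ)/q + 0)/(1 + (n:ℝ) * 0) = (q⁻¹ : ℝ) by norm_num] at h
    refine h.congr' ?_
    filter_upwards [eventually_gt_atTop 0] with m hm
    have hM : (0:ℝ) < m := by exact_mod_cast hm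
    have hMN : (0:ℝ) < (m:ℝ) + n := by linarith
    field_simp
  have hT2 : Tendsto (fun m : ℕ => (((m:ℝ)/2+1)/((m:ℝ)+n)) ^ ((n:ℝ)/2)) atTop
      (𝓝 ((2⁻¹ : ℝ) ^ ((n:ℝ)/2))) := hT2b.rpow_const (Or.inl (by norm_num))
  have hTq : Tendsto (fun m : ℕ => (((m:ℝ)/q+1)/((m:ℝ)+n)) ^ (-(n:ℝ)/q)) atTop
      (𝓝 ((q⁻¹ : ℝ) ^ (-(n:ℝ)/q))) :=
    hTqb.rpow_const (Or.inl (by positivity))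
  have hE : Tendsto (fun m : ℕ => ((1+(n:ℝ)/m)^m)⁻¹ ^ ((1:ℝ)/2 - 1/q)) atTop
      (𝓝 ((Real.exp n)⁻¹ ^ ((1:ℝ)/2 - 1/q))) :=
    ((Real.tendsto_one_add_div_pow_exp (n:ℝ)).inv₀ (Real.exp_ne_zero _)).rpow_const
      (Or.inl (inv_ne_zero (Real.exp_ne_zero _)))
  have hlim := ((((hA.mul hBinv).mul hT2).mul hTq).mul hE).const_mul
    (Real.pi ^ (-(n:ℝ)/2) * ((n:ℝ)^n) ^ ((1:ℝ)/2 - 1/q))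
  have hconst : Real.pi ^ (-(n:ℝ)/2) * ((n:ℝ)^n) ^ ((1:ℝ)/2 - 1/q) *
      (1 * 1 * (2⁻¹ : ℝ) ^ ((n:ℝ)/2) * (q⁻¹ : ℝ) ^ (-(n:ℝ)/q) *
        (Real.exp n)⁻¹ ^ ((1:ℝ)/2 - 1/q))
      = q ^ ((n : ℝ) / q) * (2 * Real.pi) ^ (-(n : ℝ) / 2) *
        (Real.exp 1 / n) ^ ((n : ℝ) * (1 / q - 1 / 2)) := by
    have f1 : ((2:ℝ)⁻¹) ^ ((n:ℝ)/2) = ((2:ℝ) ^ ((n:ℝ)/2))⁻¹ :=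
      Real.inv_rpow (by norm_num) _
    have f2 : ((q:ℝ)⁻¹) ^ (-(n:ℝ)/q) = q ^ ((n:ℝ)/q) := by
      rw [Real.inv_rpow hq0.le, ← Real.rpow_neg hq0.le]
      norm_num [neg_div]
    have f3 : ((2:ℝ) * Real.pi) ^ (-(n:ℝ)/2)
        = ((2:ℝ) ^ ((n:ℝ)/2))⁻¹ * Real.pi ^ (-(n:ℝ)/2) := by
      rw [Real.mul_rpow (by norm_num) Real.pi_pos.le, neg_div,
        Real.rpow_neg (by norm_num : (0:ℝ) ≤ 2)]
    have g1 : (Real.exp (n:ℝ))⁻¹ ^ ((1:ℝ)/2 - 1/q) =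
        (Real.exp ((n:ℝ) * ((1:ℝ)/2 - 1/q)))⁻¹ := by
      rw [← Real.exp_neg, Real.rpow_def_of_pos (Real.exp_pos _), Real.log_exp, ← Real.exp_neg]
      ring_nf
    have g2 : (((n:ℝ))^n) ^ ((1:ℝ)/2 - 1/q) = (n:ℝ) ^ ((n:ℝ) * ((1:ℝ)/2 - 1/q)) := by
      rw [← Real.rpow_natCast (n:ℝ) n, ← Real.rpow_mul hN.le]
    have f4 : (Real.exp 1 / (n:ℝ)) ^ ((n : ℝ) * (1 / q - 1 / 2))
        = (Real.exp ((n:ℝ) * ((1:ℝ)/2 - 1/q)))⁻¹ * (n:ℝ) ^ ((n:ℝ) * ((1:ℝ)/2 - 1/q)) := by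
      rw [show (n : ℝ) * (1 / q - 1 / 2) = -((n:ℝ) * ((1:ℝ)/2 - 1/q)) by ring,
        Real.rpow_neg (by positivity), Real.div_rpow (Real.exp_pos 1).le hN.le,
        Real.exp_one_rpow]
      have hrp : (0:ℝ) < (n:ℝ) ^ ((n:ℝ) * ((1:ℝ)/2 - 1/q)) := Real.rpow_pos_of_pos hN _
      field_simp
    rw [one_mul, one_mul, f1, f2, f3, f4, g1, g2]
    ring
  rw [← hconst]
  refine Tendsto.congr' ?_ hlim
  filter_upwards [eventually_ge_atTop 1] with m hm
  exact (key_eq n m (by omega) hm q hq0).symm
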